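/- Suppose M ∈ GL_{nk}(Z) satisfies (⊕_{i=1}^k B)M = M(⊕_{i=1}^k A_i) with A = A_1, all matrices in GL_n(Z) with the same irreducible characteristic polynomial. Then the ideals I and J associated to A and B are weakly equivalent; in fact with X = (J:I) and Y = (I:J) one has XY = (I:I) = (J:J), IX = J, and JY = I. -/

import Mathlib

/-- The colon (quotient) of two `ℤ`-submodules of a field `K`:
`(J : I) = {x ∈ K : x I ⊆ J}`. -/
def colonSub {K : Type*} [Field K] (J I : Submodule ℤ K) : Submodule ℤ K where
  carrier := {x : K | ∀ y ∈ I, x * y ∈ J}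
  add_mem' := by
    intro a b ha hb y hy
    have := J.add_mem (ha y hy) (hb y hy)
    simpa [add_mul] using this
  zero_mem' := by intro y hy; simp
  smul_mem' := by
    intro c x hx y hy
    rw [smul_mul_assoc]
    exact J.smul_mem c (hx y hy)

open Matrix Polynomial

private lemma mem_colonSub {K : Type*} [Field K] {J I : Submodule ℤ K} {x : K} :
    x ∈ colonSub J I ↔ ∀ y ∈ I, x * y ∈ J := Iff.rfl

private lemma abstract_weak {K : Type*} [Field K] (I J : Submodule ℤ K)
    (h1 : (1 : K) ∈ colonSub J I * colonSub I J) :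
    I * colonSub J I = J ∧ J * colonSub I J = I ∧
      colonSub J I * colonSub I J = colonSub I I ∧ colonSub I I = colonSub J J := by
  set X := colonSub J I with hX
  set Y := colonSub I J with hY
  have hIX : I * X ≤ J := Submodule.mul_le.mpr fun z hz x hx => by
    rw [mul_comm]; exact hx z hz
  have hJY : J * Y ≤ I := Submodule.mul_le.mpr fun z hz y hy => by
    rw [mul_comm]; exact hy z hz
  have hJ : J ≤ I * X := by
    intro w hw
    have hmem : w * 1 ∈ J * (X * Y) := Submodule.mul_mem_mul hw h1
    rw [mul_one] at hmem
    have h2 : J * (X * Y) ≤ I * X := by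
      rw [Submodule.mul_comm X Y, ← mul_assoc]
      exact mul_le_mul' hJY le_rfl
    exact h2 hmem
  have hI : I ≤ J * Y := by
    intro w hw
    have hmem : w * 1 ∈ I * (X * Y) := Submodule.mul_mem_mul hw h1
    rw [mul_one] at hmem
    have h2 : I * (X * Y) ≤ J * Y := by
      rw [← mul_assoc]
      exact mul_le_mul' hIX le_rfl
    exact h2 hmem
  have g1 : I * X = J := le_antisymm hIX hJ
  have g2 : J * Y = I := le_antisymm hJY hI
  refine ⟨g1, g2, ?_, ?_⟩
  · apply le_antisymm
    · refine Submodule.mul_le.mpr fun x hx y hy => ?_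
      rw [hX] at hx; rw [hY] at hy
      rw [mem_colonSub]
      intro z hz
      have hxz : x * z ∈ J := hx z hz
      have : y * (x * z) ∈ I := hy _ hxz
      have hre : x * y * z = y * (x * z) := by ring
      rwa [hre]
    · intro r hr
      have hr' : ∀ z ∈ I, r * z ∈ I := hr
      have key : ∀ t, t ∈ X * Y → r * t ∈ X * Y := by
        intro t ht
        refine Submodule.mul_induction_on ht (fun x hx y hy => ?_) (fun t1 t2 ha hb => ?_)
        · have hrx : r * x ∈ X := by
            rw [hX, mem_colonSub]
            intro z hz
            have hre : r * x * z = x * (r * z) := by ring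
            rw [hre]
            exact hx _ (hr' z hz)
          have hre : r * (x * y) = r * x * y := by ring
          rw [hre]
          exact Submodule.mul_mem_mul hrx hy
        · rw [mul_add]; exact Submodule.add_mem _ ha hb
      have := key 1 h1
      rwa [mul_one] at this
  · ext r
    simp only [mem_colonSub]
    constructor
    · intro hr w hw
      rw [← g1] at hw ⊢
      refine Submodule.mul_induction_on hw (fun z hz x hx => ?_) (fun a b ha hb => ?_)
      · have hre : r * (z * x) = r * z * x := by ring
        rw [hre]
        exact Submodule.mul_mem_mul (hr z hz) hx
      · rw [mul_add]; exact Submodule.add_mem _ ha hb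
    · intro hr w hw
      rw [← g2] at hw ⊢
      refine Submodule.mul_induction_on hw (fun z hz y hy => ?_) (fun a b ha hb => ?_)
      · have hre : r * (z * y) = r * z * y := by ring
        rw [hre]
        exact Submodule.mul_mem_mul (hr z hz) hy
      · rw [mul_add]; exact Submodule.add_mem _ ha hb


private lemma sumMulVec {m R : Type*} [Fintype m] [NonAssocSemiring R] {ι : Type*}
    (s : Finset ι) (f : ι → Matrix m m R) (x : m → R) :
    (∑ i ∈ s, f i) *ᵥ x = ∑ i ∈ s, f i *ᵥ x := by
  ext j
  simp [Matrix.mulVec, dotProduct, Finset.sum_apply, Finset.sum_mul, Matrix.sum_apply]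
  exact Finset.sum_comm

private lemma key_eigen {K : Type*} [Field K] [CharZero K] {n : ℕ} (hn : 0 < n)
    (B : Matrix (Fin n) (Fin n) ℤ)
    (hirr : Irreducible (Polynomial.map (Int.castRingHom ℚ) B.charpoly))
    (β : K) (v w : Fin n → K) (hv0 : v ≠ 0)
    (hv : (B.map (algebraMap ℤ K)).mulVec v = β • v)
    (hw : (B.map (algebraMap ℤ K)).mulVec w = β • w) :
    ∃ c : K, w = c • v := by
  classical
  set B' : Matrix (Fin n) (Fin n) ℚ := B.map (Int.castRingHom ℚ) with hB'
  have hchar : B'.charpoly = Polynomial.map (Int.castRingHom ℚ) B.charpoly :=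
    Matrix.charpoly_map B (Int.castRingHom ℚ)
  have hirr' : Irreducible B'.charpoly := by rw [hchar]; exact hirr
  have hdeg : B'.charpoly.natDegree = n := by
    simpa using Matrix.charpoly_natDegree_eq_dim B'
  -- any nonzero polynomial of degree < n is a unit at B'
  have hunit : ∀ p : ℚ[X], p ≠ 0 → p.natDegree < n → IsUnit (aeval B' p) := by
    intro p hp hdp
    have hndvd : ¬ B'.charpoly ∣ p := by
      intro h
      have := Polynomial.natDegree_le_of_dvd h hp
      omega
    obtain ⟨a, b, hab⟩ := (hirr'.coprime_iff_not_dvd).mpr hndvd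
    have h2 := congrArg (aeval B') hab
    rw [map_add, _root_.map_mul, _root_.map_mul, Matrix.aeval_self_charpoly, mul_zero, zero_add,
      _root_.map_one] at h2
    refine isUnit_iff_exists.mpr ⟨aeval B' b, ?_, h2⟩
    rw [← _root_.map_mul, mul_comm, _root_.map_mul]; exact h2
  set e : Fin n → ℚ := Pi.single (⟨0, hn⟩ : Fin n) 1 with he_def
  have he : e ≠ 0 := by
    intro h
    have := congrFun h ⟨0, hn⟩
    simp [he_def] at this
  have hpe : ∀ p : ℚ[X], p ≠ 0 → p.natDegree < n → (aeval B' p) *ᵥ e ≠ 0 := by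
    intro p hp hdp h0
    obtain ⟨U, hU⟩ := hunit p hp hdp
    apply he
    have : (↑U⁻¹ : Matrix (Fin n) (Fin n) ℚ) *ᵥ ((↑U : Matrix (Fin n) (Fin n) ℚ) *ᵥ e) = e := by
      rw [Matrix.mulVec_mulVec, Units.inv_mul, Matrix.one_mulVec]
    rw [hU, h0, Matrix.mulVec_zero] at this
    exact this.symm
  set P : Matrix (Fin n) (Fin n) ℚ := Matrix.of (fun i j : Fin n => ((B' ^ (j : ℕ)) *ᵥ e) i)
    with hP
  have hPdet : P.det ≠ 0 := by
    intro h
    obtain ⟨c, hc0, hc⟩ := (Matrix.exists_mulVec_eq_zero_iff).mpr h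
    set p : ℚ[X] := ∑ j : Fin n, Polynomial.C (c j) * X ^ (j : ℕ) with hpdef
    have hpc : ∀ j : Fin n, p.coeff (j : ℕ) = c j := by
      intro j
      rw [hpdef, Polynomial.finset_sum_coeff]
      rw [Finset.sum_eq_single j]
      · simp
      · intro b _ hbj
        simp only [Polynomial.coeff_C_mul, Polynomial.coeff_X_pow]
        rw [if_neg (by simpa [Fin.val_eq_val] using (Ne.symm hbj)), mul_zero]
      · simp
    have hp0 : p ≠ 0 := by
      intro h
      apply hc0
      funext j
      rw [← hpc j, h]; simp
    have hdp : p.natDegree < n := by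
      have hdeg' : p.degree < (n : ℕ) := by
        refine lt_of_le_of_lt (Polynomial.degree_sum_le _ _) ?_
        rw [Finset.sup_lt_iff (by exact_mod_cast WithBot.bot_lt_coe n)]
        intro j _
        refine lt_of_le_of_lt (Polynomial.degree_C_mul_X_pow_le _ _) ?_
        exact_mod_cast j.isLt
      exact Polynomial.natDegree_lt_iff_degree_lt hp0 |>.mpr hdeg'
    apply hpe p hp0 hdp
    have haep : aeval B' p = ∑ j : Fin n, c j • B' ^ (j : ℕ) := by
      rw [hpdef, map_sum]
      congr 1
      funext j
      rw [_root_.map_mul, map_pow, aeval_X, aeval_C, Algebra.algebraMap_eq_smul_one,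
        smul_mul_assoc, one_mul]
    rw [haep, sumMulVec]
    calc ∑ j : Fin n, (c j • B' ^ (j : ℕ)) *ᵥ e
        = ∑ j : Fin n, c j • ((B' ^ (j : ℕ)) *ᵥ e) := by
          refine Finset.sum_congr rfl fun j _ => ?_
          rw [Matrix.smul_mulVec]
      _ = P *ᵥ c := by
          ext i
          simp [Matrix.mulVec, dotProduct, hP, Finset.sum_apply, mul_comm]
      _ = 0 := hc
  -- the companion matrix
  set Cm : Matrix (Fin n) (Fin n) ℚ := Matrix.of (fun i j : Fin n =>
    if (j : ℕ) = n - 1 then -(B'.charpoly.coeff (i : ℕ))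
    else if (i : ℕ) = (j : ℕ) + 1 then 1 else 0) with hCm
  have hBn : B' ^ n = ∑ i : Fin n, (-(B'.charpoly.coeff (i : ℕ))) • B' ^ (i : ℕ) := by
    have h0 := Matrix.aeval_self_charpoly B'
    rw [Polynomial.aeval_eq_sum_range, hdeg, Finset.sum_range_succ] at h0
    have hlead : B'.charpoly.coeff n = 1 := by
      have := (Matrix.charpoly_monic B').coeff_natDegree
      rwa [hdeg] at this
    rw [hlead, one_smul] at h0
    have h1 : B' ^ n = -∑ i ∈ Finset.range n, B'.charpoly.coeff i • B' ^ i :=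
      eq_neg_of_add_eq_zero_right h0
    rw [h1, ← Finset.sum_neg_distrib, Finset.sum_range fun i => -(B'.charpoly.coeff i • B' ^ i)]
    exact Finset.sum_congr rfl fun i _ => (neg_smul _ _).symm
  have hLHSgen : ∀ (i j : Fin n), ∑ a, B' i a * P a j = ((B' * B' ^ (j : ℕ)) *ᵥ e) i := by
    intro i j
    simp only [hP, Matrix.of_apply, Matrix.mulVec, dotProduct, Matrix.mul_apply,
      Finset.sum_mul, Finset.mul_sum, mul_assoc]
    rw [Finset.sum_comm]
  have hBP : B' * P = P * Cm := by
    ext i j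
    rw [Matrix.mul_apply, Matrix.mul_apply]
    by_cases hj : (j : ℕ) = n - 1
    · have hpow : B' * B' ^ (j : ℕ) = B' ^ n := by rw [← pow_succ']; congr 1; omega
      have hRHS : ∑ a, P i a * Cm a j = ((B' ^ n) *ᵥ e) i := by
        rw [hBn, sumMulVec]
        simp [hCm, hP, hj, Finset.sum_apply, Matrix.neg_mulVec, Matrix.smul_mulVec,
          Finset.sum_neg_distrib, mul_comm]
      rw [hLHSgen i j, hpow, hRHS]
    · have hjlt : (j : ℕ) + 1 < n := by omega
      set j' : Fin n := ⟨(j : ℕ) + 1, hjlt⟩ with hj'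
      have hRHS : ∑ a, P i a * Cm a j = P i j' := by
        rw [Finset.sum_eq_single j']
        · simp [hCm, hj, hj']
        · intro b _ hb
          have hb' : ¬ ((b : ℕ) = (j : ℕ) + 1) := fun h => hb (Fin.ext h)
          simp [hCm, hj, hb']
        · simp
      have hpv : P i j' = ((B' * B' ^ (j : ℕ)) *ᵥ e) i := by
        rw [(pow_succ' B' (j : ℕ)).symm]
        rfl
      rw [hLHSgen i j, hRHS, hpv]
  -- move everything to K
  set σ : ℚ →+* K := algebraMap ℚ K with hσ
  have hBK : B.map (algebraMap ℤ K) = B'.map σ := by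
    ext i j
    simp [hB', hσ, Matrix.map_apply]
  set PK : Matrix (Fin n) (Fin n) K := P.map σ with hPK
  set CK : Matrix (Fin n) (Fin n) K := Cm.map σ with hCK
  have hPKdetEq : PK.det = σ P.det := by
    rw [hPK, ← RingHom.mapMatrix_apply, ← RingHom.map_det]
  have hPKdet : IsUnit PK.det := by
    rw [hPKdetEq]
    exact isUnit_iff_ne_zero.mpr (fun h => hPdet ((map_eq_zero_iff σ (RingHom.injective σ)).mp h))
  have hPK1 : PK⁻¹ * PK = 1 := Matrix.nonsing_inv_mul PK hPKdet
  have hPK2 : PK * PK⁻¹ = 1 := Matrix.mul_nonsing_inv PK hPKdet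
  have hBPK : (B.map (algebraMap ℤ K)) * PK = PK * CK := by
    rw [hBK, hPK, hCK, ← Matrix.map_mul, ← Matrix.map_mul, hBP]
  have hCKeq : CK = PK⁻¹ * (B.map (algebraMap ℤ K) * PK) := by
    rw [hBPK, ← Matrix.mul_assoc, hPK1, Matrix.one_mul]
  have heig : ∀ z : Fin n → K, (B.map (algebraMap ℤ K)) *ᵥ z = β • z →
      CK *ᵥ (PK⁻¹ *ᵥ z) = β • (PK⁻¹ *ᵥ z) := by
    intro z hz
    have h1 : CK *ᵥ (PK⁻¹ *ᵥ z) = (PK⁻¹ * B.map (algebraMap ℤ K)) *ᵥ z := by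
      rw [hCKeq, Matrix.mulVec_mulVec]
      congr 1
      rw [Matrix.mul_assoc, Matrix.mul_assoc, hPK2, Matrix.mul_one]
    rw [h1, ← Matrix.mulVec_mulVec, hz, Matrix.mulVec_smul]
  have hrecover : ∀ z : Fin n → K, PK *ᵥ (PK⁻¹ *ᵥ z) = z := by
    intro z
    rw [Matrix.mulVec_mulVec, hPK2, Matrix.one_mulVec]
  set lst : Fin n := ⟨n - 1, by omega⟩ with hlstdef
  have hvl : (lst : ℕ) = n - 1 := rfl
  -- eigenvectors of the companion matrix vanishing at the last coordinate vanish
  have hz0 : ∀ z : Fin n → K, CK *ᵥ z = β • z → z lst = 0 → z = 0 := by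
    intro z hz hl
    have main : ∀ m : ℕ, ∀ i : Fin n, (i : ℕ) = n - 1 - m → z i = 0 := by
      intro m
      induction m with
      | zero =>
        intro i hi
        have : i = lst := Fin.ext (by rw [hvl]; omega)
        rw [this]; exact hl
      | succ m ih =>
        intro i hi
        by_cases hm : m + 1 ≤ n - 1
        · have hi1 : (i : ℕ) + 1 < n := by omega
          set i' : Fin n := ⟨(i : ℕ) + 1, hi1⟩ with hi'def
          have hvi' : (i' : ℕ) = (i : ℕ) + 1 := rfl
          have hzi' : z i' = 0 := ih i' (by rw [hvi']; omega)
          have heq := congrFun hz i'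
          have hilt : (i : ℕ) < n - 1 := by omega
          have hcompute : (CK *ᵥ z) i' = σ (-(B'.charpoly.coeff ((i' : ℕ)))) * z lst + z i := by
            rw [Matrix.mulVec]
            have hterm : ∀ j : Fin n, CK i' j * z j =
                (if j = lst then σ (-(B'.charpoly.coeff ((i' : ℕ)))) * z lst else 0) +
                (if j = i then z j else 0) := by
              intro j
              rw [hCK, Matrix.map_apply, hCm]
              by_cases h1 : (j : ℕ) = n - 1
              · have hjl : j = lst := Fin.ext (by rw [hvl]; omega)
                have hji : ¬ (lst = i) := by
                  intro h
                  have h3 := congrArg Fin.val h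
                  rw [hvl] at h3; omega
                simp [h1, hjl, hji, hvl]
              · have hjl : ¬ (j = lst) := fun h => h1 (by rw [h])
                by_cases h2 : (i' : ℕ) = (j : ℕ) + 1
                · have hji : j = i := Fin.ext (by rw [hvi'] at h2; omega)
                  have hil : ¬ (i = lst) := by
                    intro h
                    have h3 := congrArg Fin.val h
                    rw [hvl] at h3; omega
                  have hin : ¬ ((i : ℕ) = n - 1) := by omega
                  simp [h1, h2, hji, hjl, hil, hin]
                · have hji : ¬ (j = i) := fun h => h2 (by rw [h])
                  simp [h1, h2, hji, hjl]
            rw [show (CK i' ⬝ᵥ z) = ∑ j, CK i' j * z j from rfl]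
            rw [Finset.sum_congr rfl fun j _ => hterm j, Finset.sum_add_distrib,
              Finset.sum_ite_eq' Finset.univ lst _, Finset.sum_ite_eq' Finset.univ i _]
            simp
          rw [hcompute] at heq
          have heq2 : σ (-(B'.charpoly.coeff ((i' : ℕ)))) * z lst + z i = β * z i' := heq
          rw [hl, hzi', mul_zero, zero_add, mul_zero] at heq2
          exact heq2
        · exact ih i (by omega)
    funext i
    exact main (n - 1 - (i : ℕ)) i (by omega)
  -- conclude
  set zv : Fin n → K := PK⁻¹ *ᵥ v with hzv
  set zw : Fin n → K := PK⁻¹ *ᵥ w with hzw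
  have hzveig : CK *ᵥ zv = β • zv := heig v hv
  have hzweig : CK *ᵥ zw = β • zw := heig w hw
  have hvlst : zv lst ≠ 0 := by
    intro h
    apply hv0
    have h2 := hz0 zv hzveig h
    rw [← hrecover v, ← hzv, h2, Matrix.mulVec_zero]
  set c : K := zw lst / zv lst with hcdef
  refine ⟨c, ?_⟩
  set t : Fin n → K := zw - c • zv with ht
  have hteig : CK *ᵥ t = β • t := by
    rw [ht, Matrix.mulVec_sub, Matrix.mulVec_smul, hzveig, hzweig, smul_sub, smul_smul,
      smul_smul, mul_comm]
  have htl : t lst = 0 := by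
    simp [ht, hcdef, div_mul_cancel₀ _ hvlst]
  have ht0 := hz0 t hteig htl
  have hzwzv : zw = c • zv := by
    rw [ht] at ht0
    exact sub_eq_zero.mp ht0
  rw [← hrecover w, ← hzw, hzwzv, Matrix.mulVec_smul, hzv, hrecover v]


/-- Suppose `M ∈ GL_{nk}(ℤ)` satisfies `(⊕ᵢ B) M = M (⊕ᵢ Aᵢ)` with `A = A₁`, all matrices
in `GL_n(ℤ)` with the same irreducible characteristic polynomial. Then the ideals `I` and
`J` associated to `A` and `B` are weakly equivalent; in fact with `X = (J : I)` and
`Y = (I : J)` one has `XY = (I : I) = (J : J)`, `IX = J` and `JY = I`. -/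
theorem stmt12 {K : Type*} [Field K] [CharZero K] {n k : ℕ} (hn : 0 < n) (hk : 0 < k)
    (B : Matrix (Fin n) (Fin n) ℤ) (A : Fin k → Matrix (Fin n) (Fin n) ℤ)
    (hB : IsUnit B.det) (hA : ∀ i, IsUnit (A i).det)
    (hirr : Irreducible (Polynomial.map (Int.castRingHom ℚ) B.charpoly))
    (hcp : ∀ i, (A i).charpoly = B.charpoly)
    (β : K) (hβ : Polynomial.aeval β B.charpoly = 0)
    (u v : Fin n → K) (hu0 : u ≠ 0) (hv0 : v ≠ 0)
    (hu : Matrix.mulVec ((A ⟨0, hk⟩).map (algebraMap ℤ K)) u = β • u)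
    (hv : Matrix.mulVec (B.map (algebraMap ℤ K)) v = β • v)
    (M : Matrix (Fin n × Fin k) (Fin n × Fin k) ℤ) (hM : IsUnit M.det)
    (hconj : Matrix.blockDiagonal (fun _ : Fin k => B) * M = M * Matrix.blockDiagonal A) :
    Submodule.span ℤ (Set.range u)
        * colonSub (Submodule.span ℤ (Set.range v)) (Submodule.span ℤ (Set.range u))
      = Submodule.span ℤ (Set.range v) ∧
    Submodule.span ℤ (Set.range v)
        * colonSub (Submodule.span ℤ (Set.range u)) (Submodule.span ℤ (Set.range v))
      = Submodule.span ℤ (Set.range u) ∧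
    colonSub (Submodule.span ℤ (Set.range v)) (Submodule.span ℤ (Set.range u))
        * colonSub (Submodule.span ℤ (Set.range u)) (Submodule.span ℤ (Set.range v))
      = colonSub (Submodule.span ℤ (Set.range u)) (Submodule.span ℤ (Set.range u)) ∧
    colonSub (Submodule.span ℤ (Set.range u)) (Submodule.span ℤ (Set.range u))
      = colonSub (Submodule.span ℤ (Set.range v)) (Submodule.span ℤ (Set.range v)) := by
  classical
  set j0 : Fin k := ⟨0, hk⟩ with hj0
  set I := Submodule.span ℤ (Set.range u) with hI
  set J := Submodule.span ℤ (Set.range v) with hJ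
  set BK := B.map (algebraMap ℤ K) with hBK
  set AK := (A j0).map (algebraMap ℤ K) with hAK
  have hNM : M⁻¹ * M = 1 := Matrix.nonsing_inv_mul M hM
  have hMN : M * M⁻¹ = 1 := Matrix.mul_nonsing_inv M hM
  set N := M⁻¹ with hN
  have hconj2 : Matrix.blockDiagonal A * N = N * Matrix.blockDiagonal (fun _ : Fin k => B) := by
    calc Matrix.blockDiagonal A * N = (N * M) * (Matrix.blockDiagonal A * N) := by
          rw [hNM, Matrix.one_mul]
      _ = N * ((M * Matrix.blockDiagonal A) * N) := by simp only [Matrix.mul_assoc]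
      _ = N * ((Matrix.blockDiagonal (fun _ : Fin k => B) * M) * N) := by rw [← hconj]
      _ = (N * Matrix.blockDiagonal (fun _ : Fin k => B)) * (M * N) := by
          simp only [Matrix.mul_assoc]
      _ = N * Matrix.blockDiagonal (fun _ : Fin k => B) := by rw [hMN, Matrix.mul_one]
  set Pblk : Fin k → Matrix (Fin n) (Fin n) ℤ :=
    fun j => Matrix.of (fun i i' => M (i, j) (i', j0)) with hPblk
  set Qblk : Fin k → Matrix (Fin n) (Fin n) ℤ :=
    fun j => Matrix.of (fun i i' => N (i, j0) (i', j)) with hQblk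
  have hPrel : ∀ j, B * Pblk j = Pblk j * A j0 := by
    intro j
    ext i i'
    have h := congrFun (congrFun hconj (i, j)) (i', j0)
    simp only [Matrix.mul_apply, Fintype.sum_prod_type, Matrix.blockDiagonal_apply,
      ite_mul, mul_ite, zero_mul, mul_zero, Finset.sum_ite_eq, Finset.sum_ite_eq',
      Finset.mem_univ, if_true] at h
    simp only [Matrix.mul_apply, hPblk, Matrix.of_apply]
    exact h
  have hQrel : ∀ j, A j0 * Qblk j = Qblk j * B := by
    intro j
    ext i i'
    have h := congrFun (congrFun hconj2 (i, j0)) (i', j)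
    simp only [Matrix.mul_apply, Fintype.sum_prod_type, Matrix.blockDiagonal_apply,
      ite_mul, mul_ite, zero_mul, mul_zero, Finset.sum_ite_eq, Finset.sum_ite_eq',
      Finset.mem_univ, if_true] at h
    simp only [Matrix.mul_apply, hQblk, Matrix.of_apply]
    exact h
  have hsum : ∑ j : Fin k, Qblk j * Pblk j = 1 := by
    ext i i'
    have h := congrFun (congrFun hNM (i, j0)) (i', j0)
    simp only [Matrix.mul_apply, Fintype.sum_prod_type] at h
    rw [Finset.sum_comm] at h
    simp only [Matrix.sum_apply, Matrix.mul_apply, hQblk, hPblk, Matrix.of_apply]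
    rw [h]
    simp [Matrix.one_apply, Prod.ext_iff]
  have hPK : ∀ j, BK * (Pblk j).map (algebraMap ℤ K) = (Pblk j).map (algebraMap ℤ K) * AK := by
    intro j
    rw [hBK, hAK, ← Matrix.map_mul, ← Matrix.map_mul, hPrel j]
  have hQK : ∀ j, AK * (Qblk j).map (algebraMap ℤ K) = (Qblk j).map (algebraMap ℤ K) * BK := by
    intro j
    rw [hBK, hAK, ← Matrix.map_mul, ← Matrix.map_mul, hQrel j]
  have hPu : ∀ j, ∃ c : K, ((Pblk j).map (algebraMap ℤ K)) *ᵥ u = c • v := by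
    intro j
    apply key_eigen hn B hirr β v _ hv0 hv
    rw [← hBK, Matrix.mulVec_mulVec, hPK j, ← Matrix.mulVec_mulVec, hu, Matrix.mulVec_smul]
  choose c hc using hPu
  have hQv : ∀ j, ∃ d : K, ((Qblk j).map (algebraMap ℤ K)) *ᵥ v = d • u := by
    intro j
    have hu' : (A j0).map (algebraMap ℤ K) *ᵥ u = β • u := by rw [← hAK]; exact hu
    apply key_eigen hn (A j0) (by rw [hcp j0]; exact hirr) β u _ hu0 hu'
    rw [← hAK, Matrix.mulVec_mulVec, hQK j, ← Matrix.mulVec_mulVec, hv,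
      Matrix.mulVec_smul]
  choose d hd using hQv
  have hsumK : ∑ j : Fin k, ((Qblk j).map (algebraMap ℤ K)) * ((Pblk j).map (algebraMap ℤ K))
      = (1 : Matrix (Fin n) (Fin n) K) := by
    have h : (RingHom.mapMatrix (algebraMap ℤ K) :
          Matrix (Fin n) (Fin n) ℤ →+* Matrix (Fin n) (Fin n) K) (∑ j : Fin k, Qblk j * Pblk j)
        = RingHom.mapMatrix (algebraMap ℤ K) (1 : Matrix (Fin n) (Fin n) ℤ) := by rw [hsum]
    rw [map_sum, _root_.map_one] at h
    simp only [_root_.map_mul, RingHom.mapMatrix_apply] at h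
    exact h
  have hone : (∑ j : Fin k, c j * d j) • u = u := by
    calc (∑ j : Fin k, c j * d j) • u = ∑ j : Fin k, (c j * d j) • u := Finset.sum_smul
      _ = ∑ j : Fin k, ((Qblk j).map (algebraMap ℤ K) * (Pblk j).map (algebraMap ℤ K)) *ᵥ u := by
          refine Finset.sum_congr rfl fun j _ => ?_
          rw [← Matrix.mulVec_mulVec, hc j, Matrix.mulVec_smul, hd j, smul_smul]
      _ = (∑ j : Fin k, (Qblk j).map (algebraMap ℤ K) * (Pblk j).map (algebraMap ℤ K)) *ᵥ u :=
          (sumMulVec _ _ _).symm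
      _ = u := by rw [hsumK, Matrix.one_mulVec]
  have hcd1 : ∑ j : Fin k, c j * d j = 1 := by
    obtain ⟨i, hi⟩ := Function.ne_iff.mp hu0
    have h2 := congrFun hone i
    simp only [Pi.smul_apply, smul_eq_mul] at h2
    exact mul_right_cancel₀ hi (by rw [h2, one_mul])
  have hintcast : ∀ (m : ℤ) (x : K), algebraMap ℤ K m * x = m • x := by
    intro m x; simp [algebraMap_int_eq, zsmul_eq_mul]
  have hcY : ∀ j, c j ∈ colonSub I J := by
    intro j
    rw [mem_colonSub]
    intro y hy
    have hle : J ≤ Submodule.comap (LinearMap.mul ℤ K (c j)) I := by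
      rw [hJ, Submodule.span_le]
      rintro _ ⟨i, rfl⟩
      simp only [Set.mem_setOf_eq, SetLike.mem_coe, Submodule.mem_comap, LinearMap.mul_apply']
      show c j * v i ∈ I
      have hxi := congrFun (hc j) i
      have hmem : ((Pblk j).map (algebraMap ℤ K) *ᵥ u) i ∈ I := by
        rw [show ((Pblk j).map (algebraMap ℤ K) *ᵥ u) i
            = ∑ a, algebraMap ℤ K (Pblk j i a) * u a from rfl]
        refine Submodule.sum_mem _ fun a _ => ?_
        rw [hintcast]
        exact Submodule.smul_mem _ _ (Submodule.subset_span ⟨a, rfl⟩)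
      have h2 : c j * v i = ((Pblk j).map (algebraMap ℤ K) *ᵥ u) i := by
        rw [hxi, Pi.smul_apply, smul_eq_mul]
      rw [h2]; exact hmem
    exact hle hy
  have hdX : ∀ j, d j ∈ colonSub J I := by
    intro j
    rw [mem_colonSub]
    intro y hy
    have hle : I ≤ Submodule.comap (LinearMap.mul ℤ K (d j)) J := by
      rw [hI, Submodule.span_le]
      rintro _ ⟨i, rfl⟩
      simp only [Set.mem_setOf_eq, SetLike.mem_coe, Submodule.mem_comap, LinearMap.mul_apply']
      show d j * u i ∈ J
      have hxi := congrFun (hd j) i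
      have hmem : ((Qblk j).map (algebraMap ℤ K) *ᵥ v) i ∈ J := by
        rw [show ((Qblk j).map (algebraMap ℤ K) *ᵥ v) i
            = ∑ a, algebraMap ℤ K (Qblk j i a) * v a from rfl]
        refine Submodule.sum_mem _ fun a _ => ?_
        rw [hintcast]
        exact Submodule.smul_mem _ _ (Submodule.subset_span ⟨a, rfl⟩)
      have h2 : d j * u i = ((Qblk j).map (algebraMap ℤ K) *ᵥ v) i := by
        rw [hxi, Pi.smul_apply, smul_eq_mul]
      rw [h2]; exact hmem
    exact hle hy
  have h1 : (1 : K) ∈ colonSub J I * colonSub I J := by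
    rw [← hcd1]
    refine Submodule.sum_mem _ fun j _ => ?_
    rw [mul_comm (c j) (d j)]
    exact Submodule.mul_mem_mul (hdX j) (hcY j)
  exact abstract_weak I J h1
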